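/- Let (X,T) be a simple, properly ordered Bratteli-Vershik system and let (X',T') be any telescoping of it. If (X,T) is well timed, then (X',T') is well timed; and if (X,T) is very well timed, then (X',T') is very well timed. -/

import Mathlib

set_option autoImplicit false

/-- An ordered Bratteli diagram: finite nonempty vertex sets `V n`, a single root
vertex at level `0`, finite edge sets `E n` (edges from level `n` to level `n+1`,
multiple edges allowed), every vertex has an outgoing edge, every non-root vertex
an incoming edge, and the edges into each vertex carry a linear order, encoded by
the relation `elt` which relates only edges with the same target. -/
structure BDiagram where
  V : ℕ → Type
  E : ℕ → Type
  fintV : ∀ n, Fintype (V n)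
  fintE : ∀ n, Fintype (E n)
  nonV : ∀ n, Nonempty (V n)
  rootSubsingleton : Subsingleton (V 0)
  src : ∀ {n}, E n → V n
  tgt : ∀ {n}, E n → V (n + 1)
  hasOut : ∀ (n : ℕ) (v : V n), ∃ e : E n, src e = v
  hasIn : ∀ (n : ℕ) (v : V (n + 1)), ∃ e : E n, tgt e = v
  elt : ∀ {n}, E n → E n → Prop
  elt_tgt : ∀ (n : ℕ) (e f : E n), elt e f → tgt e = tgt f
  elt_irrefl : ∀ (n : ℕ) (e : E n), ¬ elt e e
  elt_trans : ∀ (n : ℕ) (e f g : E n), elt e f → elt f g → elt e g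
  elt_total : ∀ (n : ℕ) (e f : E n), tgt e = tgt f → e ≠ f → elt e f ∨ elt f e

namespace BDiagram

variable (B : BDiagram)

def castV {m n : ℕ} (h : m = n) (v : B.V m) : B.V n := h ▸ v

/-- An edge is minimal if no edge (into the same target) is below it. -/
def IsMinEdge {n : ℕ} (e : B.E n) : Prop := ∀ e' : B.E n, ¬ B.elt e' e

/-- An edge is maximal if no edge (into the same target) is above it. -/
def IsMaxEdge {n : ℕ} (e : B.E n) : Prop := ∀ e' : B.E n, ¬ B.elt e e'

/-- The space of infinite paths from the root. -/
def PathSpace : Type := { x : ∀ n, B.E n // ∀ n, B.tgt (x n) = B.src (x (n + 1)) }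

def IsMinPath (x : B.PathSpace) : Prop := ∀ n, B.IsMinEdge (x.1 n)

def IsMaxPath (x : B.PathSpace) : Prop := ∀ n, B.IsMaxEdge (x.1 n)

/-- Properly ordered: unique minimal and unique maximal path. -/
def ProperlyOrdered : Prop :=
  (∃! x : B.PathSpace, B.IsMinPath x) ∧ (∃! x : B.PathSpace, B.IsMaxPath x)

/-- The partial order on cofinal paths: `x < y` iff they eventually agree and at the
last disagreement the edge of `x` is below the edge of `y`. -/
def pathLT (x y : B.PathSpace) : Prop :=
  ∃ N : ℕ, B.elt (x.1 N) (y.1 N) ∧ ∀ n : ℕ, N < n → x.1 n = y.1 n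

/-- `T` is the Vershik map: each non-maximal path goes to its successor, and each
maximal path goes to a minimal path. -/
def IsVershik (T : B.PathSpace ≃ B.PathSpace) : Prop :=
  (∀ x : B.PathSpace, ¬ B.IsMaxPath x →
    B.pathLT x (T x) ∧ ∀ z : B.PathSpace, B.pathLT x z → ¬ B.pathLT z (T x)) ∧
  (∀ x : B.PathSpace, B.IsMaxPath x → B.IsMinPath (T x))

/-- `f` is a chain of consecutive edges on levels `[a, b)`. -/
def SegOn (f : ∀ i, B.E i) (a b : ℕ) : Prop :=
  ∀ i : ℕ, a ≤ i → i + 1 < b → B.tgt (f i) = B.src (f (i + 1))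

/-- Simplicity: some telescoping has complete connections between adjacent levels. -/
def Simple : Prop :=
  ∃ ns : ℕ → ℕ, StrictMono ns ∧ ns 0 = 0 ∧
    ∀ (l c : ℕ), ns (l + 1) = c + 1 →
      ∀ (v : B.V (ns l)) (w : B.V (c + 1)),
        ∃ f : ∀ i, B.E i, B.SegOn f (ns l) (c + 1) ∧ B.src (f (ns l)) = v ∧ B.tgt (f c) = w

/-- The natural (Cantor) topology on the path space, induced from the product of
the discrete topologies on the edge sets. -/
def pathTop : TopologicalSpace B.PathSpace :=
  TopologicalSpace.induced Subtype.val (@Pi.topologicalSpace ℕ B.E (fun _ => ⊥))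

/-- Integer iterates of a bijection of the path space. -/
def iterZ (T : B.PathSpace ≃ B.PathSpace) (m : ℤ) : B.PathSpace ≃ B.PathSpace :=
  (T : Equiv.Perm B.PathSpace) ^ m

/-- Two paths have the same `k`-coding: for every time `m` the initial segments of
`T^m x` and `T^m y` from the root to level `k` coincide. -/
def SameCoding (T : B.PathSpace ≃ B.PathSpace) (k : ℕ) (x y : B.PathSpace) : Prop :=
  ∀ (m : ℤ) (i : ℕ), i < k → ((B.iterZ T m) x).1 i = ((B.iterZ T m) y).1 i

/-- A depth `k` pair: distinct paths with the same `k`-coding but not the same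
`(k+1)`-coding. -/
def DepthPair (T : B.PathSpace ≃ B.PathSpace) (k : ℕ) (x y : B.PathSpace) : Prop :=
  x ≠ y ∧ B.SameCoding T k x y ∧ ¬ B.SameCoding T (k + 1) x y

/-- The pair `x, y` has a `j` cut: for some time `m`, both `T^m x` and `T^m y` are
minimal from the root into level `j`. -/
def HasCut (T : B.PathSpace ≃ B.PathSpace) (j : ℕ) (x y : B.PathSpace) : Prop :=
  ∃ m : ℤ, (∀ i : ℕ, i < j → B.IsMinEdge (((B.iterZ T m) x).1 i)) ∧
    (∀ i : ℕ, i < j → B.IsMinEdge (((B.iterZ T m) y).1 i))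

/-- Nonexpansive: for every `k ≥ 1` there are two distinct paths with the same
`k`-coding. -/
def Nonexpansive (T : B.PathSpace ≃ B.PathSpace) : Prop :=
  ∀ k : ℕ, 1 ≤ k → ∃ x y : B.PathSpace, x ≠ y ∧ B.SameCoding T k x y

/-- Well timed: for every `k ≥ 1` and every `j > k` there is a depth `k` pair with
a `j` cut. -/
def WellTimed (T : B.PathSpace ≃ B.PathSpace) : Prop :=
  ∀ k : ℕ, 1 ≤ k → ∀ j : ℕ, k < j →
    ∃ x y : B.PathSpace, B.DepthPair T k x y ∧ B.HasCut T j x y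

/-- Very well timed: for every `k ≥ 1` there is a depth `k` pair having a `j` cut
for every `j > k`. -/
def VeryWellTimed (T : B.PathSpace ≃ B.PathSpace) : Prop :=
  ∀ k : ℕ, 1 ≤ k →
    ∃ x y : B.PathSpace, B.DepthPair T k x y ∧ ∀ j : ℕ, k < j → B.HasCut T j x y

/-- Weakly well timed: for infinitely many `k ≥ 1`, for every `j > k` there is a
depth `k` pair with a `j` cut. -/
def WeaklyWellTimed (T : B.PathSpace ≃ B.PathSpace) : Prop :=
  ∀ K : ℕ, ∃ k : ℕ, K ≤ k ∧ 1 ≤ k ∧ ∀ j : ℕ, k < j →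
    ∃ x y : B.PathSpace, B.DepthPair T k x y ∧ B.HasCut T j x y

/-- Untimed: for every `k ≥ 1` there is a `j > k` such that no depth `k` pair has a
`j` cut. -/
def Untimed (T : B.PathSpace ≃ B.PathSpace) : Prop :=
  ∀ k : ℕ, 1 ≤ k → ∃ j : ℕ, k < j ∧
    ∀ x y : B.PathSpace, B.DepthPair T k x y → ¬ B.HasCut T j x y

/-- Very untimed: for every `k ≥ 1`, no depth `k` pair has a `(k+1)` cut. -/
def VeryUntimed (T : B.PathSpace ≃ B.PathSpace) : Prop :=
  ∀ k : ℕ, 1 ≤ k →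
    ∀ x y : B.PathSpace, B.DepthPair T k x y → ¬ B.HasCut T (k + 1) x y

/-- Finite paths from the root to level `n`. -/
def FinPath (n : ℕ) : Type :=
  { f : (i : Fin n) → B.E i.val //
    ∀ (i : ℕ) (h : i + 1 < n), B.tgt (f ⟨i, by omega⟩) = B.src (f ⟨i + 1, h⟩) }

/-- The lexicographic (from the end) order on finite paths to level `n` induced by
the orders on the edges. -/
def finLT {n : ℕ} (p q : B.FinPath n) : Prop :=
  ∃ (N : ℕ) (h : N < n), B.elt (p.1 ⟨N, h⟩) (q.1 ⟨N, h⟩) ∧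
    ∀ (i : ℕ) (hi : i < n), N < i → p.1 ⟨i, hi⟩ = q.1 ⟨i, hi⟩

/-- The finite path `p` to level `n` ends at the vertex `v`. -/
def EndsAt {n : ℕ} (p : B.FinPath n) (v : B.V n) : Prop :=
  ∀ (m : ℕ) (h : n = m + 1), B.tgt (p.1 ⟨m, by omega⟩) = B.castV h v

/-- The initial segment of an infinite path, from the root to level `n`. -/
def pathInit (x : B.PathSpace) (n : ℕ) : B.FinPath n :=
  ⟨fun i => x.1 i.val, fun i _ => x.2 i⟩

/-- The vertex of an infinite path at level `n`. -/
def pathVert (x : B.PathSpace) (n : ℕ) : B.V n := B.src (x.1 n)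

theorem pathInit_endsAt (x : B.PathSpace) (n : ℕ) :
    B.EndsAt (B.pathInit x n) (B.pathVert x n) := by
  intro m h
  subst h
  exact x.2 m

/-- Truncation of a finite path to a lower level. -/
def truncTo {n : ℕ} (k : ℕ) (hk : k ≤ n) (p : B.FinPath n) : B.FinPath k :=
  ⟨fun i => p.1 ⟨i.val, by omega⟩, fun i h => p.2 i (by omega)⟩

/-- Paths `x, x'` are `k`-equivalent at level `n`: there is an order isomorphism
between the sets of finite paths from the root into their level-`n` vertices which
preserves truncations to level `k` (equality of `k`-basic blocks) and which matches
the initial segment of `x` with the initial segment of `x'` (the "dot" is in the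
same place). -/
def KEquivAt (k n : ℕ) (x x' : B.PathSpace) : Prop :=
  ∃ φ : { p : B.FinPath n // B.EndsAt p (B.pathVert x n) } ≃
      { p : B.FinPath n // B.EndsAt p (B.pathVert x' n) },
    (∀ p q, B.finLT p.1 q.1 ↔ B.finLT (φ p).1 (φ q).1) ∧
    (∀ p (i : ℕ) (hik : i < k) (hin : i < n), ((φ p).1).1 ⟨i, hin⟩ = (p.1).1 ⟨i, hin⟩) ∧
    φ ⟨B.pathInit x n, B.pathInit_endsAt x n⟩ = ⟨B.pathInit x' n, B.pathInit_endsAt x' n⟩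

/-- Paths are `k`-equivalent: they agree from the root to level `k` and are
`k`-equivalent at every level `n > k`. -/
def KEquivPaths (k : ℕ) (x x' : B.PathSpace) : Prop :=
  (∀ i : ℕ, i < k → x.1 i = x'.1 i) ∧ ∀ n : ℕ, k < n → B.KEquivAt k n x x'

/-- Standard nonexpansive: for every `k ≥ 1` there is a pair of distinct
`k`-equivalent paths. -/
def SNE : Prop := ∀ k : ℕ, 1 ≤ k → ∃ x x' : B.PathSpace, x ≠ x' ∧ B.KEquivPaths k x x'

/-!  ### Telescoping  -/

theorem castV_eq_of_heq {m n : ℕ} (h : m = n) {v : B.V m} {w : B.V n} (hw : HEq v w) :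
    B.castV h v = w := by
  subst h
  exact eq_of_heq hw

theorem castV_heq {m n : ℕ} (h : m = n) (v : B.V m) : HEq (B.castV h v) v := by
  subst h
  rfl

theorem castV_inj {m n : ℕ} (h : m = n) {v w : B.V m}
    (hvw : B.castV h v = B.castV h w) : v = w := by
  subst h
  exact hvw

def castE {m n : ℕ} (h : m = n) (e : B.E m) : B.E n := h ▸ e

noncomputable def chainFrom (a : ℕ) (v : B.V a) : (i : ℕ) → B.E (a + i)
  | 0 => (B.hasOut a v).choose
  | i + 1 => (B.hasOut (a + i + 1) (B.tgt (chainFrom a v i))).choose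

theorem chainFrom_src_zero (a : ℕ) (v : B.V a) : B.src (B.chainFrom a v 0) = v :=
  (B.hasOut a v).choose_spec

theorem chainFrom_src_succ (a : ℕ) (v : B.V a) (i : ℕ) :
    B.src (B.chainFrom a v (i + 1)) = B.tgt (B.chainFrom a v i) :=
  (B.hasOut (a + i + 1) (B.tgt (B.chainFrom a v i))).choose_spec

noncomputable def chainTo (a : ℕ) : (j : ℕ) → (w : B.V (a + j + 1)) → (i : ℕ) → i ≤ j → B.E (a + i)
  | 0, w, i, _ => B.castE (by omega : a + 0 = a + i) (B.hasIn a w).choose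
  | j + 1, w, i, _ =>
      if h : i ≤ j then chainTo a j (B.src (B.hasIn (a + j + 1) w).choose) i h
      else B.castE (by omega : a + (j + 1) = a + i) (B.hasIn (a + j + 1) w).choose

theorem chainTo_tgt_last (a : ℕ) : ∀ (j : ℕ) (w : B.V (a + j + 1)),
    B.tgt (B.chainTo a j w j le_rfl) = w := by
  intro j w
  cases j with
  | zero =>
      simp only [chainTo]
      exact (B.hasIn a w).choose_spec
  | succ j =>
      simp only [chainTo]
      rw [dif_neg (by omega : ¬ j + 1 ≤ j)]
      exact (B.hasIn (a + j + 1) w).choose_spec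

theorem chainTo_chain (a : ℕ) : ∀ (j : ℕ) (w : B.V (a + j + 1)) (i : ℕ) (h : i + 1 ≤ j)
    (h' : i ≤ j), B.tgt (B.chainTo a j w i h') = B.src (B.chainTo a j w (i + 1) h) := by
  intro j
  induction j with
  | zero => intro w i h h'; omega
  | succ j ih =>
      intro w i h h'
      by_cases hij : i + 1 ≤ j
      · simp only [chainTo]
        rw [dif_pos (by omega : i ≤ j), dif_pos hij]
        exact ih _ i hij (by omega)
      · have hi : i = j := by omega
        subst hi
        simp only [chainTo]
        rw [dif_pos (le_refl i), dif_neg (by omega : ¬ i + 1 ≤ i)]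
        exact B.chainTo_tgt_last a i _


def TelE (a b : ℕ) : Type :=
  { f : (i : Fin (b - a)) → B.E (a + i.val) //
    ∀ (i : ℕ) (h : i + 1 < b - a), B.tgt (f ⟨i, by omega⟩) = B.src (f ⟨i + 1, h⟩) }

def telSrc {a b : ℕ} (hab : a < b) (f : B.TelE a b) : B.V a :=
  B.src (f.1 ⟨0, by omega⟩)

def telTgt {a b : ℕ} (hab : a < b) (f : B.TelE a b) : B.V b :=
  B.castV (by omega : a + (b - a - 1) + 1 = b) (B.tgt (f.1 ⟨b - a - 1, by omega⟩))

def telLT {a b : ℕ} (f g : B.TelE a b) : Prop :=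
  ∃ (N : ℕ) (h : N < b - a), B.elt (f.1 ⟨N, h⟩) (g.1 ⟨N, h⟩) ∧
    ∀ (i : ℕ) (hi : i < b - a), N < i → f.1 ⟨i, hi⟩ = g.1 ⟨i, hi⟩

noncomputable def Telescope (ns : ℕ → ℕ) (hmono : StrictMono ns) (h0 : ns 0 = 0) : BDiagram where
  V l := B.V (ns l)
  E l := B.TelE (ns l) (ns (l + 1))
  fintV l := B.fintV (ns l)
  fintE l := by
    classical
    letI : ∀ i : Fin (ns (l + 1) - ns l), Fintype (B.E (ns l + i.val)) := fun i => B.fintE _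
    exact Subtype.fintype _
  nonV l := B.nonV (ns l)
  rootSubsingleton := by show Subsingleton (B.V (ns 0)); rw [h0]; exact B.rootSubsingleton
  src {l} f := B.telSrc (hmono (Nat.lt_succ_self l)) f
  tgt {l} f := B.telTgt (hmono (Nat.lt_succ_self l)) f
  hasOut := by
    intro l v
    refine ⟨⟨fun i => B.chainFrom (ns l) v i.val,
      fun i h => (B.chainFrom_src_succ (ns l) v i).symm⟩, ?_⟩
    exact B.chainFrom_src_zero (ns l) v
  hasIn := by
    intro l w
    have hab : ns l < ns (l + 1) := hmono (Nat.lt_succ_self l)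
    have hj : ns l + (ns (l + 1) - ns l - 1) + 1 = ns (l + 1) := by omega
    refine ⟨⟨fun i => B.chainTo (ns l) (ns (l + 1) - ns l - 1) (B.castV hj.symm w) i.val
        (by omega), fun i h => B.chainTo_chain _ _ _ i (by omega) (by omega)⟩, ?_⟩
    show B.castV (by omega) (B.tgt (B.chainTo (ns l) (ns (l + 1) - ns l - 1)
      (B.castV hj.symm w) (ns (l + 1) - ns l - 1) (by omega))) = w
    rw [B.chainTo_tgt_last]
    exact B.castV_eq_of_heq _ (B.castV_heq _ w)
  elt {l} f g := B.telLT f g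
  elt_tgt := by
    rintro l f g ⟨N, hN, hlt, hgt⟩
    show B.telTgt _ f = B.telTgt _ g
    unfold telTgt
    refine congrArg (B.castV _) ?_
    rcases eq_or_lt_of_le (show N ≤ ns (l + 1) - ns l - 1 by omega) with h | h
    · subst h
      exact B.elt_tgt _ _ _ hlt
    · exact congrArg B.tgt (hgt _ (by omega) h)
  elt_irrefl := by
    rintro l f ⟨N, h, hlt, -⟩
    exact B.elt_irrefl _ _ hlt
  elt_trans := by
    rintro l f g h ⟨N₁, hN₁, hlt₁, hgt₁⟩ ⟨N₂, hN₂, hlt₂, hgt₂⟩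
    rcases lt_trichotomy N₁ N₂ with hc | hc | hc
    · exact ⟨N₂, hN₂, by rw [hgt₁ N₂ hN₂ hc]; exact hlt₂,
        fun i hi hN => (hgt₁ i hi (by omega)).trans (hgt₂ i hi hN)⟩
    · subst hc
      exact ⟨N₁, hN₁, B.elt_trans _ _ _ _ hlt₁ hlt₂,
        fun i hi hN => (hgt₁ i hi hN).trans (hgt₂ i hi hN)⟩
    · refine ⟨N₁, hN₁, ?_, fun i hi hN => (hgt₁ i hi hN).trans (hgt₂ i hi (by omega))⟩
      rw [← hgt₂ N₁ hN₁ hc]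
      exact hlt₁
  elt_total := by
    intro l f g htgt hne
    classical
    have hab : ns l < ns (l + 1) := hmono (Nat.lt_succ_self l)
    set b := ns (l + 1) - ns l with hb
    have hex : ∃ N, ∃ h : N < b, f.1 ⟨N, h⟩ ≠ g.1 ⟨N, h⟩ := by
      by_contra hco
      push_neg at hco
      exact hne (Subtype.ext (funext fun i => hco i.val i.isLt))
    set P : ℕ → Prop := fun N => ∃ h : N < b, f.1 ⟨N, h⟩ ≠ g.1 ⟨N, h⟩ with hP
    obtain ⟨N₀, hN₀⟩ := hex
    set N := Nat.findGreatest P b with hNdef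
    have hPN : P N := Nat.findGreatest_spec (le_of_lt hN₀.choose) hN₀
    have hafter : ∀ i (hi : i < b), N < i → f.1 ⟨i, hi⟩ = g.1 ⟨i, hi⟩ := by
      intro i hi hNi
      by_contra hcon
      exact Nat.findGreatest_is_greatest hNi (le_of_lt hi) ⟨hi, hcon⟩
    clear_value N
    obtain ⟨hNb, hNne⟩ := hPN
    have htgtN : B.tgt (f.1 ⟨N, hNb⟩) = B.tgt (g.1 ⟨N, hNb⟩) := by
      rcases eq_or_lt_of_le (show N ≤ b - 1 by omega) with h | h
      · -- N is the last index; use equality of targets of the composite edges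
        subst h
        exact B.castV_inj _ htgt
      · have h2 : f.1 ⟨N + 1, by omega⟩ = g.1 ⟨N + 1, by omega⟩ :=
          hafter (N + 1) (by omega) (by omega)
        rw [f.2 N (by omega), g.2 N (by omega), h2]
    rcases B.elt_total _ _ _ htgtN hNne with h | h
    · exact Or.inl ⟨N, hNb, h, hafter⟩
    · exact Or.inr ⟨N, hNb, h, fun i hi hN => (hafter i hi hN).symm⟩

def teleMap (ns : ℕ → ℕ) (hmono : StrictMono ns) (h0 : ns 0 = 0) (x : B.PathSpace) :
    (B.Telescope ns hmono h0).PathSpace :=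
  ⟨fun l => ⟨fun i => x.1 (ns l + i.val), fun i _ => x.2 (ns l + i)⟩, fun l => by
    have hab : ns l < ns (l + 1) := hmono (Nat.lt_succ_self l)
    have hm : ns l + (ns (l + 1) - ns l - 1) + 1 = ns (l + 1) := by omega
    show B.castV _ (B.tgt (x.1 (ns l + (ns (l + 1) - ns l - 1)))) = B.src (x.1 (ns (l + 1) + 0))
    rw [x.2 (ns l + (ns (l + 1) - ns l - 1))]
    exact B.castV_eq_of_heq _ (by rw [hm]; exact HEq.rfl)⟩


/-- Level `n+1` is uniformly ordered: there is a single nonempty block `P` of paths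
from the root to level `n` such that the `n`-basic block at every vertex at level
`n+1` is a positive power of `P`. -/
def UniformlyOrderedLevel (n : ℕ) : Prop :=
  ∃ (p : ℕ) (hp : 0 < p) (P : Fin p → B.FinPath n),
    ∀ v : B.V (n + 1), ∃ (m : ℕ), 0 < m ∧
      ∃ enum : Fin (m * p) ≃ { q : B.FinPath (n + 1) // B.EndsAt q v },
        (∀ i j : Fin (m * p), i < j ↔ B.finLT (enum i).1 (enum j).1) ∧
        (∀ i : Fin (m * p),
          B.truncTo n (Nat.le_succ n) (enum i).1 = P ⟨i.val % p, Nat.mod_lt _ hp⟩)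

/-- The ordinal label of an edge: its position in the linear order on the edges
into its target. -/
noncomputable def edgeLabel {n : ℕ} (e : B.E n) : ℕ := Nat.card { e' : B.E n // B.elt e' e }

/-- Deterministic: for every `n ≥ 1`, distinct edges with the same source at level
`n` have different ordinal labels. -/
def Deterministic : Prop :=
  ∀ n : ℕ, 1 ≤ n → ∀ e f : B.E n, B.src e = B.src f → e ≠ f →
    B.edgeLabel e ≠ B.edgeLabel f

end BDiagram

/-- A Bratteli–Vershik system: a simple, properly ordered ordered Bratteli diagram
together with its Vershik map. -/
structure BVSystem where
  B : BDiagram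
  T : B.PathSpace ≃ B.PathSpace
  proper : B.ProperlyOrdered
  simple : B.Simple
  vershik : B.IsVershik T

/-- Conjugacy of systems: an equivariant homeomorphism of the path spaces taking
minimal paths to minimal paths. -/
def Conjugate (S S' : BVSystem) : Prop :=
  ∃ φ : S.B.PathSpace ≃ S'.B.PathSpace,
    (@Continuous _ _ S.B.pathTop S'.B.pathTop φ) ∧
    (@Continuous _ _ S'.B.pathTop S.B.pathTop φ.symm) ∧
    (∀ x, φ (S.T x) = S'.T (φ x)) ∧
    (∀ x, S.B.IsMinPath x → S'.B.IsMinPath (φ x))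

/-- An odometer: a system whose diagram has exactly one vertex at every level. -/
def IsOdometer (S : BVSystem) : Prop := ∀ n, Subsingleton (S.B.V n)

namespace BDiagram

section Aux

variable (B : BDiagram)

theorem path_entry_heq (x : B.PathSpace) {m n : ℕ} (h : m = n) : HEq (x.1 m) (x.1 n) := by
  subst h; rfl

theorem heq_tgt {m n : ℕ} (h : m = n) {e : B.E m} {f : B.E n} (hef : HEq e f) :
    HEq (B.tgt e) (B.tgt f) := by
  subst h; rw [eq_of_heq hef]

theorem heq_src {m n : ℕ} (h : m = n) {e : B.E m} {f : B.E n} (hef : HEq e f) :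
    HEq (B.src e) (B.src f) := by
  subst h; rw [eq_of_heq hef]

theorem heq_elt {m n : ℕ} (h : m = n) {e1 f1 : B.E m} {e2 f2 : B.E n}
    (he : HEq e1 e2) (hf : HEq f1 f2) : B.elt e1 f1 ↔ B.elt e2 f2 := by
  subst h; rw [eq_of_heq he, eq_of_heq hf]

theorem castE_heq {m n : ℕ} (h : m = n) (e : B.E m) : HEq (B.castE h e) e := by
  subst h; rfl

theorem castE_eq_of_heq {m n : ℕ} (h : m = n) {e : B.E m} {f : B.E n} (hef : HEq e f) :
    B.castE h e = f := by
  subst h; exact eq_of_heq hef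

theorem castE_apply_path (x : B.PathSpace) {m n : ℕ} (h : m = n) :
    B.castE h (x.1 m) = x.1 n := by subst h; rfl

theorem castE_tgt {m n : ℕ} (h : m = n) (e : B.E m) :
    B.tgt (B.castE h e) = B.castV (congrArg Nat.succ h) (B.tgt e) := by
  subst h; rfl

theorem castE_src {m n : ℕ} (h : m = n) (e : B.E m) :
    B.src (B.castE h e) = B.castV h (B.src e) := by
  subst h; rfl

theorem castV_eq_castV' {m m' n : ℕ} (h : m = n) (h' : m' = n) {v : B.V m} {w : B.V m'}
    (hvw : HEq v w) : B.castV h v = B.castV h' w := by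
  subst h; subst h'; exact eq_of_heq hvw

theorem path_eq_idx {m n : ℕ} (h : m = n) (x y : B.PathSpace) (he : x.1 m = y.1 m) :
    x.1 n = y.1 n := by subst h; exact he

theorem path_elt_idx {m n : ℕ} (h : m = n) (x y : B.PathSpace)
    (he : B.elt (x.1 m) (y.1 m)) : B.elt (x.1 n) (y.1 n) := by subst h; exact he

/-- Distinct paths which eventually agree are comparable. -/
theorem pathLT_total (u v : B.PathSpace) (M : ℕ)
    (h : ∀ n, M < n → u.1 n = v.1 n) (hne : u ≠ v) : B.pathLT u v ∨ B.pathLT v u := by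
  classical
  have hex : ∃ N, N ≤ M ∧ u.1 N ≠ v.1 N := by
    by_contra hc
    push_neg at hc
    apply hne
    apply Subtype.ext
    funext n
    rcases le_or_gt n M with hn | hn
    · exact hc n hn
    · exact h n hn
  obtain ⟨N₀, hN₀M, hN₀⟩ := hex
  set P : ℕ → Prop := fun N => u.1 N ≠ v.1 N with hP
  set N := Nat.findGreatest P M with hN
  have hPN : P N := Nat.findGreatest_spec hN₀M hN₀
  have hafter : ∀ n, N < n → u.1 n = v.1 n := by
    intro n hn
    rcases le_or_gt n M with h1 | h1
    · by_contra hcon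
      exact Nat.findGreatest_is_greatest hn h1 hcon
    · exact h n h1
  have htgt : B.tgt (u.1 N) = B.tgt (v.1 N) := by
    have h1 : u.1 (N + 1) = v.1 (N + 1) := hafter _ (Nat.lt_succ_self N)
    rw [u.2 N, v.2 N, h1]
  rcases B.elt_total N _ _ htgt hPN with hcase | hcase
  · exact Or.inl ⟨N, hcase, hafter⟩
  · exact Or.inr ⟨N, hcase, fun n hn => (hafter n hn).symm⟩

end Aux

section Lvl

variable (ns : ℕ → ℕ) (hmono : StrictMono ns) (h0 : ns 0 = 0)

include hmono h0

/-- The level of index `i`: the unique `l` with `ns l ≤ i < ns (l+1)`. -/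
noncomputable def tlvl (i : ℕ) : ℕ := Nat.findGreatest (fun l => ns l ≤ i) i

omit h0 in
theorem le_ns (l : ℕ) : l ≤ ns l := by
  induction l with
  | zero => exact Nat.zero_le _
  | succ l ih => exact Nat.lt_of_le_of_lt ih (hmono (Nat.lt_succ_self l))

omit hmono in
theorem tlvl_le (i : ℕ) : ns (tlvl ns i) ≤ i :=
  Nat.findGreatest_spec (P := fun l => ns l ≤ i) (Nat.zero_le i)
    (by show ns 0 ≤ i; omega)

omit h0 in
theorem tlvl_lt (i : ℕ) : i < ns (tlvl ns i + 1) := by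
  by_contra hc
  push_neg at hc
  have h1 : tlvl ns i + 1 ≤ i := le_trans (le_ns ns hmono _) hc
  exact Nat.findGreatest_is_greatest (Nat.lt_succ_self _) h1 hc

theorem tlvl_eq {l i : ℕ} (h1 : ns l ≤ i) (h2 : i < ns (l + 1)) : tlvl ns i = l := by
  rcases lt_trichotomy (tlvl ns i) l with hc | hc | hc
  · have : ns (tlvl ns i + 1) ≤ ns l := hmono.monotone hc
    have := tlvl_lt ns hmono i
    omega
  · exact hc
  · have : ns (l + 1) ≤ ns (tlvl ns i) := hmono.monotone hc
    have := tlvl_le ns h0 i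
    omega

omit h0 in
theorem ns_lt_succ (l : ℕ) : ns l < ns (l + 1) := hmono (by omega)

theorem tlvl_add (i : ℕ) : ns (tlvl ns i) + (i - ns (tlvl ns i)) = i := by
  have := tlvl_le ns h0 i
  omega

theorem tlvl_sub_lt (i : ℕ) :
    i - ns (tlvl ns i) < ns (tlvl ns i + 1) - ns (tlvl ns i) := by
  have h1 := tlvl_le ns h0 i
  have h2 := tlvl_lt ns hmono i
  omega

end Lvl

section Flatten

variable (B : BDiagram) (ns : ℕ → ℕ) (hmono : StrictMono ns) (h0 : ns 0 = 0)

theorem seg_entry_heq (Y : (B.Telescope ns hmono h0).PathSpace) {l l' t t' : ℕ}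
    (hl : l = l') (ht : t = t') (h1 : t < ns (l + 1) - ns l) (h2 : t' < ns (l' + 1) - ns l') :
    HEq ((Y.1 l).1 ⟨t, h1⟩) ((Y.1 l').1 ⟨t', h2⟩) := by
  subst hl; subst ht; rfl

/-- The underlying edge sequence of the "flattening" of a telescope path. -/
noncomputable def flatFun (Y : (B.Telescope ns hmono h0).PathSpace) (i : ℕ) : B.E i :=
  B.castE (tlvl_add ns hmono h0 i)
    ((Y.1 (tlvl ns i)).1 ⟨i - ns (tlvl ns i), tlvl_sub_lt ns hmono h0 i⟩)

theorem flatFun_chain (Y : (B.Telescope ns hmono h0).PathSpace) (i : ℕ) :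
    B.tgt (flatFun B ns hmono h0 Y i) = B.src (flatFun B ns hmono h0 Y (i + 1)) := by
  have hle := tlvl_le ns h0 i
  have hlt := tlvl_lt ns hmono i
  have hle' := tlvl_le ns h0 (i + 1)
  have hlt' := tlvl_lt ns hmono (i + 1)
  unfold flatFun
  rw [B.castE_tgt, B.castE_src]
  apply B.castV_eq_castV'
  rcases Nat.lt_or_ge (i + 1) (ns (tlvl ns i + 1)) with hA | hB
  · -- same level
    have hll : tlvl ns (i + 1) = tlvl ns i :=
      tlvl_eq ns hmono h0 (le_trans hle (Nat.le_succ i)) hA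
    have key := (Y.1 (tlvl ns i)).2 (i - ns (tlvl ns i)) (by rw [hll] at hlt'; omega)
    refine (heq_of_eq key).trans ?_
    refine B.heq_src (by simp only [Fin.val_mk]; rw [hll]; omega) ?_
    exact seg_entry_heq B ns hmono h0 Y hll.symm (by rw [hll]; omega) _ _
  · -- level boundary: i + 1 = ns (tlvl ns i + 1)
    have hi1 : i + 1 = ns (tlvl ns i + 1) := by omega
    have hll : tlvl ns (i + 1) = tlvl ns i + 1 :=
      tlvl_eq ns hmono h0 (le_of_eq hi1.symm)
        (by have := ns_lt_succ ns hmono (tlvl ns i + 1); omega)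
    set L := tlvl ns i with hL
    have hD : ns L + (ns (L + 1) - ns L - 1) + 1 = ns (L + 1) := by
      have := ns_lt_succ ns hmono L; omega
    have hj := Y.2 L
    have hj' : HEq ((B.Telescope ns hmono h0).tgt (Y.1 L))
        ((B.Telescope ns hmono h0).src (Y.1 (L + 1))) := heq_of_eq hj
    have step1 : HEq (B.tgt ((Y.1 L).1 ⟨i - ns L, tlvl_sub_lt ns hmono h0 i⟩))
        (B.tgt ((Y.1 L).1 ⟨ns (L + 1) - ns L - 1, by omega⟩)) :=
      B.heq_tgt (by simp only [Fin.val_mk]; omega) (seg_entry_heq B ns hmono h0 Y rfl (by omega) _ _)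
    have step2 : HEq (B.tgt ((Y.1 L).1 ⟨ns (L + 1) - ns L - 1, by omega⟩))
        ((B.Telescope ns hmono h0).tgt (Y.1 L)) :=
      (B.castV_heq hD _).symm
    have step4 : HEq ((B.Telescope ns hmono h0).src (Y.1 (L + 1)))
        (B.src ((Y.1 (tlvl ns (i + 1))).1 ⟨i + 1 - ns (tlvl ns (i + 1)), tlvl_sub_lt ns hmono h0 (i + 1)⟩)) := by
      refine B.heq_src ?_ ?_
      · simp only [Fin.val_mk]; rw [hll]; omega
      · exact seg_entry_heq B ns hmono h0 Y hll.symm (by rw [hll]; omega) _ _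
    exact ((step1.trans step2).trans hj').trans step4

/-- Flattening: the inverse of `teleMap`. -/
noncomputable def flatten (Y : (B.Telescope ns hmono h0).PathSpace) : B.PathSpace :=
  ⟨flatFun B ns hmono h0 Y, flatFun_chain B ns hmono h0 Y⟩

theorem flatten_teleMap (x : B.PathSpace) :
    flatten B ns hmono h0 (B.teleMap ns hmono h0 x) = x := by
  apply Subtype.ext
  funext i
  show B.castE (tlvl_add ns hmono h0 i) (x.1 (ns (tlvl ns i) + (i - ns (tlvl ns i)))) = x.1 i
  exact B.castE_apply_path x _

theorem teleMap_flatten (Y : (B.Telescope ns hmono h0).PathSpace) :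
    B.teleMap ns hmono h0 (flatten B ns hmono h0 Y) = Y := by
  apply Subtype.ext
  funext l
  apply Subtype.ext
  funext t
  show flatFun B ns hmono h0 Y (ns l + t.val) = (Y.1 l).1 t
  have hlt : ns l + t.val < ns (l + 1) := by
    have := t.isLt; show ns l + t.val < ns (l + 1); omega
  have hll : tlvl ns (ns l + t.val) = l :=
    tlvl_eq ns hmono h0 (Nat.le_add_right _ _) hlt
  unfold flatFun
  refine B.castE_eq_of_heq _ ?_
  have : ((Y.1 l).1 t) = ((Y.1 l).1 ⟨t.val, t.isLt⟩) := rfl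
  rw [this]
  exact seg_entry_heq B ns hmono h0 Y hll (by rw [hll]; omega) _ _

theorem teleMap_injective : Function.Injective (B.teleMap ns hmono h0) :=
  Function.LeftInverse.injective (flatten_teleMap B ns hmono h0)

end Flatten

section Splice

variable (B : BDiagram)

/-- The edge function of a modified segment: agrees with `f` above position `p`,
equals `e` at position `p`, and is an arbitrary chain below `p`. -/
noncomputable def spliceFun {a b : ℕ} (f : B.TelE a b) (p : ℕ) (e : B.E (a + p))
    (t : ℕ) (ht : t < b - a) : B.E (a + t) :=
  if h1 : t < p then
    B.chainTo a (p - 1) (B.castV (by omega) (B.src e)) t (by omega)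
  else if h2 : t = p then B.castE (by rw [h2]) e
  else f.1 ⟨t, ht⟩

theorem spliceFun_lt {a b : ℕ} (f : B.TelE a b) (p : ℕ) (e : B.E (a + p))
    (t : ℕ) (ht : t < b - a) (h1 : t < p) :
    spliceFun B f p e t ht =
      B.chainTo a (p - 1) (B.castV (by omega) (B.src e)) t (by omega) := by
  unfold spliceFun
  rw [dif_pos h1]

theorem spliceFun_eq {a b : ℕ} (f : B.TelE a b) (p : ℕ) (e : B.E (a + p))
    (ht : p < b - a) : spliceFun B f p e p ht = e := by
  unfold spliceFun
  rw [dif_neg (lt_irrefl p), dif_pos rfl]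
  exact eq_of_heq (B.castE_heq _ e)

theorem spliceFun_gt {a b : ℕ} (f : B.TelE a b) (p : ℕ) (e : B.E (a + p))
    (t : ℕ) (ht : t < b - a) (h1 : p < t) : spliceFun B f p e t ht = f.1 ⟨t, ht⟩ := by
  unfold spliceFun
  rw [dif_neg (by omega), dif_neg (by omega)]

theorem spliceFun_chain {a b : ℕ} (f : B.TelE a b) (p : ℕ) (hp : p < b - a)
    (e : B.E (a + p)) (htgt : B.tgt e = B.tgt (f.1 ⟨p, hp⟩)) (t : ℕ) (ht : t + 1 < b - a) :
    B.tgt (spliceFun B f p e t (by omega)) = B.src (spliceFun B f p e (t + 1) ht) := by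
  rcases Nat.lt_trichotomy (t + 1) p with hc | hc | hc
  · rw [spliceFun_lt B f p e t (by omega) (by omega), spliceFun_lt B f p e (t + 1) ht hc]
    exact B.chainTo_chain a (p - 1) _ t (by omega) (by omega)
  · subst hc
    rw [spliceFun_lt B f (t + 1) e t (by omega) (by omega),
      spliceFun_eq B f (t + 1) e (by omega)]
    exact (B.chainTo_tgt_last a t _).trans (eq_of_heq (B.castV_heq _ _))
  · rcases Nat.lt_or_ge p t with hc2 | hc2
    · rw [spliceFun_gt B f p e t (by omega) hc2, spliceFun_gt B f p e (t + 1) ht (by omega)]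
      exact f.2 t ht
    · have hpt : p = t := by omega
      subst hpt
      rw [spliceFun_eq B f p e (by omega), spliceFun_gt B f p e (p + 1) ht (by omega)]
      rw [htgt]
      exact f.2 p ht

/-- Splice an alternative edge `e` into a segment at position `p`. -/
noncomputable def splice {a b : ℕ} (f : B.TelE a b) (p : ℕ) (hp : p < b - a)
    (e : B.E (a + p)) (htgt : B.tgt e = B.tgt (f.1 ⟨p, hp⟩)) : B.TelE a b :=
  ⟨fun t => spliceFun B f p e t.val t.isLt,
    fun t h => spliceFun_chain B f p hp e htgt t h⟩

theorem splice_at {a b : ℕ} (f : B.TelE a b) (p : ℕ) (hp : p < b - a)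
    (e : B.E (a + p)) (htgt : B.tgt e = B.tgt (f.1 ⟨p, hp⟩)) :
    (splice B f p hp e htgt).1 ⟨p, hp⟩ = e := spliceFun_eq B f p e hp

theorem splice_above {a b : ℕ} (f : B.TelE a b) (p : ℕ) (hp : p < b - a)
    (e : B.E (a + p)) (htgt : B.tgt e = B.tgt (f.1 ⟨p, hp⟩)) (t : ℕ) (ht : t < b - a)
    (h1 : p < t) : (splice B f p hp e htgt).1 ⟨t, ht⟩ = f.1 ⟨t, ht⟩ :=
  spliceFun_gt B f p e t ht h1

end Splice

section Transfer

variable (B : BDiagram) (ns : ℕ → ℕ) (hmono : StrictMono ns) (h0 : ns 0 = 0)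

theorem teleMap_isMax_of (x : B.PathSpace) (h : B.IsMaxPath x) :
    (B.Telescope ns hmono h0).IsMaxPath (B.teleMap ns hmono h0 x) := by
  intro l g hlt
  obtain ⟨N, hN, helt, -⟩ := hlt
  exact h (ns l + N) _ helt

theorem teleMap_isMin_of (x : B.PathSpace) (h : B.IsMinPath x) :
    (B.Telescope ns hmono h0).IsMinPath (B.teleMap ns hmono h0 x) := by
  intro l g hlt
  obtain ⟨N, hN, helt, -⟩ := hlt
  exact h (ns l + N) _ helt

theorem isMax_of_teleMap (x : B.PathSpace)
    (h : (B.Telescope ns hmono h0).IsMaxPath (B.teleMap ns hmono h0 x)) :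
    B.IsMaxPath x := by
  intro i e helt
  have h1 : ns (tlvl ns i) ≤ i := tlvl_le ns h0 i
  have h2 : i < ns (tlvl ns i + 1) := tlvl_lt ns hmono i
  set l := tlvl ns i with hl
  have hp : i - ns l < ns (l + 1) - ns l := by omega
  have hidx : ns l + (i - ns l) = i := by omega
  set f : B.TelE (ns l) (ns (l + 1)) := (B.teleMap ns hmono h0 x).1 l with hf
  set e' : B.E (ns l + (i - ns l)) := B.castE hidx.symm e with he'
  have ht1 : HEq (B.tgt e') (B.tgt e) := B.heq_tgt hidx (B.castE_heq hidx.symm e)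
  have ht2 : B.tgt e = B.tgt (x.1 i) := (B.elt_tgt i (x.1 i) e helt).symm
  have ht3 : HEq (B.tgt (x.1 i)) (B.tgt (f.1 ⟨i - ns l, hp⟩)) :=
    B.heq_tgt hidx.symm (B.path_entry_heq x hidx.symm)
  have htgt : B.tgt e' = B.tgt (f.1 ⟨i - ns l, hp⟩) :=
    eq_of_heq ((ht1.trans (heq_of_eq ht2)).trans ht3)
  set g := B.splice f (i - ns l) hp e' htgt with hg
  have helt' : B.elt (f.1 ⟨i - ns l, hp⟩) (g.1 ⟨i - ns l, hp⟩) := by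
    rw [hg, B.splice_at]
    exact (B.heq_elt hidx.symm (B.path_entry_heq x hidx.symm)
      (B.castE_heq hidx.symm e).symm).mp helt
  have hBelt : (B.Telescope ns hmono h0).elt f g :=
    ⟨i - ns l, hp, helt', fun t ht htp => (B.splice_above f _ hp e' htgt t ht htp).symm⟩
  exact h l g hBelt

theorem isMin_of_teleMap (x : B.PathSpace)
    (h : (B.Telescope ns hmono h0).IsMinPath (B.teleMap ns hmono h0 x)) :
    B.IsMinPath x := by
  intro i e helt
  have h1 : ns (tlvl ns i) ≤ i := tlvl_le ns h0 i
  have h2 : i < ns (tlvl ns i + 1) := tlvl_lt ns hmono i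
  set l := tlvl ns i with hl
  have hp : i - ns l < ns (l + 1) - ns l := by omega
  have hidx : ns l + (i - ns l) = i := by omega
  set f : B.TelE (ns l) (ns (l + 1)) := (B.teleMap ns hmono h0 x).1 l with hf
  set e' : B.E (ns l + (i - ns l)) := B.castE hidx.symm e with he'
  have ht1 : HEq (B.tgt e') (B.tgt e) := B.heq_tgt hidx (B.castE_heq hidx.symm e)
  have ht2 : B.tgt e = B.tgt (x.1 i) := B.elt_tgt i e (x.1 i) helt
  have ht3 : HEq (B.tgt (x.1 i)) (B.tgt (f.1 ⟨i - ns l, hp⟩)) :=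
    B.heq_tgt hidx.symm (B.path_entry_heq x hidx.symm)
  have htgt : B.tgt e' = B.tgt (f.1 ⟨i - ns l, hp⟩) :=
    eq_of_heq ((ht1.trans (heq_of_eq ht2)).trans ht3)
  set g := B.splice f (i - ns l) hp e' htgt with hg
  have helt' : B.elt (g.1 ⟨i - ns l, hp⟩) (f.1 ⟨i - ns l, hp⟩) := by
    rw [hg, B.splice_at]
    exact (B.heq_elt hidx.symm (B.castE_heq hidx.symm e).symm
      (B.path_entry_heq x hidx.symm)).mp helt
  have hBelt : (B.Telescope ns hmono h0).elt g f :=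
    ⟨i - ns l, hp, helt', fun t ht htp => B.splice_above f _ hp e' htgt t ht htp⟩
  exact h l g hBelt

theorem pathLT_teleMap_iff (x y : B.PathSpace) :
    (B.Telescope ns hmono h0).pathLT (B.teleMap ns hmono h0 x) (B.teleMap ns hmono h0 y) ↔
      B.pathLT x y := by
  constructor
  · rintro ⟨L, ⟨N', hN', helt, hab'⟩, hab⟩
    refine ⟨ns L + N', helt, ?_⟩
    intro n hn
    rcases Nat.lt_or_ge n (ns (L + 1)) with hc | hc
    · have hnL : ns L ≤ n := by omega
      have := hab' (n - ns L) (by omega) (by omega)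
      exact B.path_eq_idx (show ns L + (n - ns L) = n by omega) x y this
    · have hL' : L < tlvl ns n := by
        by_contra hcon
        push_neg at hcon
        have : ns (tlvl ns n + 1) ≤ ns (L + 1) := hmono.monotone (by omega)
        have := tlvl_lt ns hmono n
        omega
      have hseg := hab (tlvl ns n) hL'
      have := congrFun (congrArg Subtype.val hseg)
        ⟨n - ns (tlvl ns n), tlvl_sub_lt ns hmono h0 n⟩
      exact B.path_eq_idx (tlvl_add ns hmono h0 n) x y this
  · rintro ⟨N, helt, hab⟩
    have h1 : ns (tlvl ns N) ≤ N := tlvl_le ns h0 N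
    have h2 : N < ns (tlvl ns N + 1) := tlvl_lt ns hmono N
    set L := tlvl ns N with hL
    refine ⟨L, ⟨N - ns L, by omega, ?_, ?_⟩, ?_⟩
    · exact B.path_elt_idx (show N = ns L + (N - ns L) by omega) x y helt
    · intro t ht htp
      exact hab (ns L + t) (by omega)
    · intro l hl
      apply Subtype.ext
      funext t
      refine hab (ns l + t.val) ?_
      have : ns (L + 1) ≤ ns l := hmono.monotone hl
      omega

end Transfer

section Conj

variable (B : BDiagram) (ns : ℕ → ℕ) (hmono : StrictMono ns) (h0 : ns 0 = 0)
variable (T : B.PathSpace ≃ B.PathSpace)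
variable (T' : (B.Telescope ns hmono h0).PathSpace ≃ (B.Telescope ns hmono h0).PathSpace)

theorem teleMap_vershik (hproper : B.ProperlyOrdered) (hT : B.IsVershik T)
    (hT' : (B.Telescope ns hmono h0).IsVershik T') (x : B.PathSpace) :
    B.teleMap ns hmono h0 (T x) = T' (B.teleMap ns hmono h0 x) := by
  by_cases hmax : B.IsMaxPath x
  · -- maximal case: both sides are minimal paths of the telescope
    have h1 : (B.Telescope ns hmono h0).IsMaxPath (B.teleMap ns hmono h0 x) :=
      teleMap_isMax_of B ns hmono h0 x hmax
    have h2 : (B.Telescope ns hmono h0).IsMinPath (T' (B.teleMap ns hmono h0 x)) :=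
      hT'.2 _ h1
    have h3 : B.IsMinPath (T x) := hT.2 x hmax
    -- pull the min path back
    set z := flatten B ns hmono h0 (T' (B.teleMap ns hmono h0 x)) with hz
    have hz2 : B.teleMap ns hmono h0 z = T' (B.teleMap ns hmono h0 x) :=
      teleMap_flatten B ns hmono h0 _
    have h4 : B.IsMinPath z := by
      apply isMin_of_teleMap B ns hmono h0 z
      rw [hz2]
      exact h2
    obtain ⟨w, hw, huniq⟩ := hproper.1
    have h5 : z = T x := (huniq z h4).trans (huniq (T x) h3).symm
    rw [← hz2, h5]
  · -- non-maximal case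
    have hmax' : ¬ (B.Telescope ns hmono h0).IsMaxPath (B.teleMap ns hmono h0 x) :=
      fun hc => hmax (isMax_of_teleMap B ns hmono h0 x hc)
    obtain ⟨hlt', hmin'⟩ := hT'.1 _ hmax'
    obtain ⟨hlt, hminimal⟩ := hT.1 x hmax
    have hA : (B.Telescope ns hmono h0).pathLT (B.teleMap ns hmono h0 x)
        (B.teleMap ns hmono h0 (T x)) := (pathLT_teleMap_iff B ns hmono h0 x (T x)).mpr hlt
    have h1 : ¬ (B.Telescope ns hmono h0).pathLT (B.teleMap ns hmono h0 (T x))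
        (T' (B.teleMap ns hmono h0 x)) := hmin' _ hA
    have h2 : ¬ (B.Telescope ns hmono h0).pathLT (T' (B.teleMap ns hmono h0 x))
        (B.teleMap ns hmono h0 (T x)) := by
      intro hc
      set z := flatten B ns hmono h0 (T' (B.teleMap ns hmono h0 x)) with hz
      have hz2 : B.teleMap ns hmono h0 z = T' (B.teleMap ns hmono h0 x) :=
        teleMap_flatten B ns hmono h0 _
      rw [← hz2] at hc hlt'
      exact hminimal z ((pathLT_teleMap_iff B ns hmono h0 x z).mp hlt')
        ((pathLT_teleMap_iff B ns hmono h0 z (T x)).mp hc)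
    by_contra hne
    obtain ⟨N1, -, hab1⟩ := hA
    obtain ⟨N2, -, hab2⟩ := hlt'
    have hM : ∀ n, max N1 N2 < n →
        (B.teleMap ns hmono h0 (T x)).1 n = (T' (B.teleMap ns hmono h0 x)).1 n :=
      fun n hn => ((hab1 n (by omega)).symm).trans (hab2 n (by omega))
    rcases (B.Telescope ns hmono h0).pathLT_total _ _ (max N1 N2) hM hne with hc | hc
    · exact h1 hc
    · exact h2 hc

theorem teleMap_iterZ (hproper : B.ProperlyOrdered) (hT : B.IsVershik T)
    (hT' : (B.Telescope ns hmono h0).IsVershik T') :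
    ∀ (m : ℤ) (x : B.PathSpace),
      B.teleMap ns hmono h0 ((B.iterZ T m) x) =
        ((B.Telescope ns hmono h0).iterZ T' m) (B.teleMap ns hmono h0 x) := by
  have conj := teleMap_vershik B ns hmono h0 T T' hproper hT hT'
  have hsymm : ∀ x, B.teleMap ns hmono h0 (T.symm x) = T'.symm (B.teleMap ns hmono h0 x) := by
    intro x
    rw [Equiv.eq_symm_apply, ← conj (T.symm x), Equiv.apply_symm_apply]
  intro m
  induction m using Int.induction_on with
  | zero =>
    intro x
    show B.teleMap ns hmono h0 (((T : Equiv.Perm B.PathSpace) ^ (0 : ℤ)) x) =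
      ((T' : Equiv.Perm (B.Telescope ns hmono h0).PathSpace) ^ (0 : ℤ)) _
    rw [zpow_zero, zpow_zero]
    rfl
  | succ n ih =>
    intro x
    have e1 : (B.iterZ T ((n : ℤ) + 1)) x = (B.iterZ T (n : ℤ)) (T x) := by
      show ((T : Equiv.Perm B.PathSpace) ^ ((n : ℤ) + 1)) x = _
      rw [zpow_add_one]
      rfl
    have e2 : ((B.Telescope ns hmono h0).iterZ T' ((n : ℤ) + 1)) (B.teleMap ns hmono h0 x) =
        ((B.Telescope ns hmono h0).iterZ T' (n : ℤ)) (T' (B.teleMap ns hmono h0 x)) := by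
      show ((T' : Equiv.Perm (B.Telescope ns hmono h0).PathSpace) ^ ((n : ℤ) + 1)) _ = _
      rw [zpow_add_one]
      rfl
    rw [e1, e2, ih (T x), conj x]
  | pred n ih =>
    intro x
    have e1 : (B.iterZ T (-(n : ℤ) - 1)) x = (B.iterZ T (-(n : ℤ))) (T.symm x) := by
      show ((T : Equiv.Perm B.PathSpace) ^ (-(n : ℤ) - 1)) x = _
      rw [zpow_sub_one]
      rfl
    have e2 : ((B.Telescope ns hmono h0).iterZ T' (-(n : ℤ) - 1)) (B.teleMap ns hmono h0 x) =
        ((B.Telescope ns hmono h0).iterZ T' (-(n : ℤ))) (T'.symm (B.teleMap ns hmono h0 x)) := by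
      show ((T' : Equiv.Perm (B.Telescope ns hmono h0).PathSpace) ^ (-(n : ℤ) - 1)) _ = _
      rw [zpow_sub_one]
      rfl
    rw [e1, e2, ih (T.symm x), hsymm x]

end Conj

section Coding

variable (B : BDiagram) (ns : ℕ → ℕ) (hmono : StrictMono ns) (h0 : ns 0 = 0)
variable (T : B.PathSpace ≃ B.PathSpace)
variable (T' : (B.Telescope ns hmono h0).PathSpace ≃ (B.Telescope ns hmono h0).PathSpace)

theorem sameCoding_mono (S : B.PathSpace ≃ B.PathSpace) {j j' : ℕ} (h : j ≤ j')
    {x y : B.PathSpace} (hs : B.SameCoding S j' x y) : B.SameCoding S j x y :=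
  fun m i hi => hs m i (lt_of_lt_of_le hi h)

theorem sameCoding_teleMap_iff (hproper : B.ProperlyOrdered) (hT : B.IsVershik T)
    (hT' : (B.Telescope ns hmono h0).IsVershik T') (k : ℕ) (x y : B.PathSpace) :
    (B.Telescope ns hmono h0).SameCoding T' k (B.teleMap ns hmono h0 x) (B.teleMap ns hmono h0 y)
      ↔ B.SameCoding T (ns k) x y := by
  have hiter := teleMap_iterZ B ns hmono h0 T T' hproper hT hT'
  constructor
  · intro h m i hi
    have h1 : ns (tlvl ns i) ≤ i := tlvl_le ns h0 i
    have h2 : i < ns (tlvl ns i + 1) := tlvl_lt ns hmono i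
    have hlk : tlvl ns i < k := by
      by_contra hc
      push_neg at hc
      have : ns k ≤ ns (tlvl ns i) := hmono.monotone hc
      omega
    have hseg := h m (tlvl ns i) hlk
    rw [← hiter m x, ← hiter m y] at hseg
    have := congrFun (congrArg Subtype.val hseg)
      ⟨i - ns (tlvl ns i), tlvl_sub_lt ns hmono h0 i⟩
    exact B.path_eq_idx (tlvl_add ns hmono h0 i) _ _ this
  · intro h m l hl
    rw [← hiter m x, ← hiter m y]
    apply Subtype.ext
    funext t
    refine h m (ns l + t.val) ?_
    have ht := t.isLt
    have h3 : ns (l + 1) ≤ ns k := hmono.monotone hl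
    show ns l + t.val < ns k
    omega

theorem hasCut_teleMap (hproper : B.ProperlyOrdered) (hT : B.IsVershik T)
    (hT' : (B.Telescope ns hmono h0).IsVershik T') (j : ℕ) (x y : B.PathSpace)
    (h : B.HasCut T (ns j) x y) :
    (B.Telescope ns hmono h0).HasCut T' j (B.teleMap ns hmono h0 x) (B.teleMap ns hmono h0 y) := by
  have hiter := teleMap_iterZ B ns hmono h0 T T' hproper hT hT'
  obtain ⟨m, hx, hy⟩ := h
  have key : ∀ z : B.PathSpace,
      (∀ i : ℕ, i < ns j → B.IsMinEdge (((B.iterZ T m) z).1 i)) →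
      ∀ i : ℕ, i < j → (B.Telescope ns hmono h0).IsMinEdge
        ((((B.Telescope ns hmono h0).iterZ T' m) (B.teleMap ns hmono h0 z)).1 i) := by
    intro z hz i hij
    rw [← hiter m z]
    intro g hlt
    obtain ⟨N, hN, helt, -⟩ := hlt
    have hlt2 : ns i + N < ns j := by
      have h1 : ns (i + 1) ≤ ns j := hmono.monotone hij
      omega
    exact hz (ns i + N) hlt2 _ helt
  exact ⟨m, key x hx, key y hy⟩

end Coding






end BDiagram

/-- If a simple, properly ordered Bratteli–Vershik system is well
timed, then every telescoping of it is well timed; if it is very well timed, every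
telescoping is very well timed. -/
theorem wellTimed_telescoping
    (B : BDiagram) (T : B.PathSpace ≃ B.PathSpace)
    (hproper : B.ProperlyOrdered) (hsimple : B.Simple) (hT : B.IsVershik T)
    (ns : ℕ → ℕ) (hmono : StrictMono ns) (h0 : ns 0 = 0)
    (T' : (B.Telescope ns hmono h0).PathSpace ≃ (B.Telescope ns hmono h0).PathSpace)
    (hT' : (B.Telescope ns hmono h0).IsVershik T') :
    (B.WellTimed T → (B.Telescope ns hmono h0).WellTimed T') ∧
    (B.VeryWellTimed T → (B.Telescope ns hmono h0).VeryWellTimed T') := by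
  have hinj := BDiagram.teleMap_injective B ns hmono h0
  have hsc := BDiagram.sameCoding_teleMap_iff B ns hmono h0 T T' hproper hT hT'
  have hcut := BDiagram.hasCut_teleMap B ns hmono h0 T T' hproper hT hT'
  have hsucc : ∀ k : ℕ, ns k + 1 ≤ ns (k + 1) :=
    fun k => BDiagram.ns_lt_succ ns hmono k
  have hlens : ∀ k : ℕ, k ≤ ns k := fun k => BDiagram.le_ns ns hmono k
  have hdepth : ∀ (k : ℕ) (x y : B.PathSpace), B.DepthPair T (ns k) x y →
      (B.Telescope ns hmono h0).DepthPair T' k (B.teleMap ns hmono h0 x) (B.teleMap ns hmono h0 y) := by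
    rintro k x y ⟨hne, hsame, hnot⟩
    refine ⟨fun hc => hne (hinj hc), (hsc k x y).mpr hsame, fun hc => hnot ?_⟩
    exact BDiagram.sameCoding_mono B T (hsucc k) ((hsc (k + 1) x y).mp hc)
  constructor
  · intro hWT k hk j hkj
    have hnk : 1 ≤ ns k := le_trans hk (hlens k)
    obtain ⟨x, y, hdp, hc⟩ := hWT (ns k) hnk (ns j) (hmono hkj)
    exact ⟨_, _, hdepth k x y hdp, hcut j x y hc⟩
  · intro hVWT k hk
    have hnk : 1 ≤ ns k := le_trans hk (hlens k)
    obtain ⟨x, y, hdp, hc⟩ := hVWT (ns k) hnk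
    exact ⟨_, _, hdepth k x y hdp, fun j hkj => hcut j x y (hc (ns j) (hmono hkj))⟩
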